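/- arXiv:1705.06312 — 2 statements merged into one kernel-verified Lean document; each statement's English description precedes it below -/
import Mathlib

section
/- Constraint propagation: for a context C[□] = σ(φ₁,...,φ_{i-1},□,φ_{i+1},...,φₙ) and any pattern φ, ⊨ C[φᵢ ∧ ⌈φ⌉] = C[φᵢ] ∧ ⌈φ⌉, i.e., definedness constraints can be moved through symbol applications. -/
namespace ML

structure Signature where
  S : Type
  Sym : Type
  n : Sym → ℕ
  arg : (f : Sym) → Fin (n f) → S
  res : Sym → S

inductive Pattern (σ : Signature) : σ.S → Type
  | var (s : σ.S) (x : ℕ) : Pattern σ s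
  | app (f : σ.Sym) (args : ∀ i : Fin (σ.n f), Pattern σ (σ.arg f i)) : Pattern σ (σ.res f)
  | neg {s : σ.S} (φ : Pattern σ s) : Pattern σ s
  | and {s : σ.S} (φ ψ : Pattern σ s) : Pattern σ s
  | ex {s : σ.S} (s' : σ.S) (x : ℕ) (φ : Pattern σ s) : Pattern σ s

namespace Pattern

variable {σ : Signature}

def or {s : σ.S} (φ ψ : Pattern σ s) : Pattern σ s := .neg (.and (.neg φ) (.neg ψ))

def imp {s : σ.S} (φ ψ : Pattern σ s) : Pattern σ s := .or (.neg φ) ψ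

def piff {s : σ.S} (φ ψ : Pattern σ s) : Pattern σ s := .and (.imp φ ψ) (.imp ψ φ)

def all {s : σ.S} (s' : σ.S) (x : ℕ) (φ : Pattern σ s) : Pattern σ s :=
  .neg (.ex s' x (.neg φ))

end Pattern

/-- Free variables of a pattern, as sort-variable pairs. -/
def FV {σ : Signature} : {s : σ.S} → Pattern σ s → Set ((s : σ.S) × ℕ)
  | _, .var s x => {⟨s, x⟩}
  | _, .app _ args => ⋃ i, FV (args i)
  | _, .neg φ => FV φ
  | _, .and φ ψ => FV φ ∪ FV ψ
  | _, .ex s' x φ => FV φ \ {⟨s', x⟩}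

structure Model (σ : Signature) where
  carrier : σ.S → Type
  nonempty : ∀ s, Nonempty (carrier s)
  interp : (f : σ.Sym) → (∀ i : Fin (σ.n f), carrier (σ.arg f i)) → Set (carrier (σ.res f))

def Val {σ : Signature} (M : Model σ) := (s : σ.S) → ℕ → M.carrier s

open Classical in
noncomputable def Val.upd {σ : Signature} {M : Model σ} (ρ : Val M) (s : σ.S) (x : ℕ)
    (a : M.carrier s) : Val M :=
  fun s' y => if h : s' = s ∧ y = x then cast (congrArg M.carrier h.1).symm a else ρ s' y

/-- Pattern evaluation: the set of elements matching the pattern. -/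
noncomputable def eval {σ : Signature} {M : Model σ} :
    {s : σ.S} → Pattern σ s → Val M → Set (M.carrier s)
  | _, .var s x, ρ => {ρ s x}
  | _, .app f args, ρ =>
      { b | ∃ a : ∀ i, M.carrier (σ.arg f i), (∀ i, a i ∈ eval (args i) ρ) ∧ b ∈ M.interp f a }
  | _, .neg φ, ρ => (eval φ ρ)ᶜ
  | _, .and φ ψ, ρ => eval φ ρ ∩ eval ψ ρ
  | _, .ex s' x φ, ρ => ⋃ a : M.carrier s', eval φ (ρ.upd s' x a)

def Sat {σ : Signature} (M : Model σ) {s : σ.S} (φ : Pattern σ s) : Prop :=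
  ∀ ρ : Val M, eval φ ρ = Set.univ

def Valid {σ : Signature} {s : σ.S} (φ : Pattern σ s) : Prop :=
  ∀ M : Model σ, Sat M φ

end ML
namespace ML

variable {σ : Signature}

/-- The argument sort of a unary (definedness) symbol. -/
def arg1 (d : σ.Sym) (hn : σ.n d = 1) : σ.S := σ.arg d ⟨0, by omega⟩

/-- Definedness applied to a pattern: `⌈φ⌉`. -/
noncomputable def ceil (d : σ.Sym) (hn : σ.n d = 1) (φ : Pattern σ (arg1 d hn)) :
    Pattern σ (σ.res d) :=
  .app d (fun j => cast (by
    have hj : j = (⟨0, by omega⟩ : Fin (σ.n d)) := Fin.ext (by have := j.isLt; omega)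
    rw [hj]; rfl) φ)

/-- The definedness axiom pattern `⌈x⌉`. -/
noncomputable def defAx (d : σ.Sym) (hn : σ.n d = 1) : Pattern σ (σ.res d) :=
  ceil d hn (.var (arg1 d hn) 0)

/-- Totality `⌊φ⌋ ≡ ¬⌈¬φ⌉`. -/
noncomputable def floor (d : σ.Sym) (hn : σ.n d = 1) (φ : Pattern σ (arg1 d hn)) :
    Pattern σ (σ.res d) :=
  .neg (ceil d hn (.neg φ))

/-- Equality pattern `φ = φ' ≡ ⌊φ ↔ φ'⌋`. -/
noncomputable def eqP (d : σ.Sym) (hn : σ.n d = 1) (φ φ' : Pattern σ (arg1 d hn)) :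
    Pattern σ (σ.res d) :=
  floor d hn (φ.piff φ')

/-- Membership pattern `x ∈ φ ≡ ⌈x ∧ φ⌉`. -/
noncomputable def mem (d : σ.Sym) (hn : σ.n d = 1) (x : ℕ) (φ : Pattern σ (arg1 d hn)) :
    Pattern σ (σ.res d) :=
  ceil d hn ((Pattern.var (arg1 d hn) x).and φ)

/-- The context `σ(φ₁,…,□,…,φₙ)` with `ψ` plugged into the `i`-th position. -/
def plug (f : σ.Sym) (i : Fin (σ.n f)) (args : ∀ j : Fin (σ.n f), Pattern σ (σ.arg f j))
    (ψ : Pattern σ (σ.arg f i)) : Pattern σ (σ.res f) :=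
  .app f (fun j => if h : j = i then cast (by rw [h]) ψ else args j)

/-- Bound variables of a pattern. -/
def BV : {s : σ.S} → Pattern σ s → Set ((s : σ.S) × ℕ)
  | _, .var _ _ => ∅
  | _, .app _ args => ⋃ i, BV (args i)
  | _, .neg φ => BV φ
  | _, .and φ ψ => BV φ ∪ BV ψ
  | _, .ex s' x φ => BV φ ∪ {⟨s', x⟩}

open Classical in
/-- Substitution `φ[ψ/x]` of pattern `ψ` for variable `x` of sort `t` (capture-free
provided the bound variables of `φ` are disjoint from the free variables of `ψ`). -/
noncomputable def subst : {s : σ.S} → Pattern σ s → (t : σ.S) → ℕ → Pattern σ t → Pattern σ s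
  | _, .var s' y, t, x, ψ =>
      if h : s' = t ∧ y = x then cast (by rw [h.1]) ψ else .var s' y
  | _, .app f args, t, x, ψ => .app f (fun i => subst (args i) t x ψ)
  | _, .neg φ, t, x, ψ => .neg (subst φ t x ψ)
  | _, .and φ₁ φ₂, t, x, ψ => .and (subst φ₁ t x ψ) (subst φ₂ t x ψ)
  | _, .ex s' y φ, t, x, ψ =>
      if s' = t ∧ y = x then .ex s' y φ else .ex s' y (subst φ t x ψ)

/-- Semantic entailment from a set of axiom patterns. -/
def Entails (F : Set ((s : σ.S) × Pattern σ s)) {s : σ.S} (φ : Pattern σ s) : Prop :=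
  ∀ M : Model σ, (∀ ψ ∈ F, Sat M ψ.2) → Sat M φ

/-- A pattern is functional in `M` iff it evaluates to a singleton under every valuation. -/
def Functional (M : Model σ) {s : σ.S} (φ : Pattern σ s) : Prop :=
  ∀ ρ : Val M, ∃ a : M.carrier s, eval φ ρ = {a}

end ML

namespace ML

variable {σ : Signature} {M : Model σ}

theorem arg1_eq (d : σ.Sym) (hn : σ.n d = 1) (j : Fin (σ.n d)) :
    arg1 d hn = σ.arg d j := by
  unfold arg1; congr 1; exact Fin.ext (by have := j.isLt; omega)

theorem eval_cast' {s t : σ.S} (h : s = t) (hp : Pattern σ s = Pattern σ t)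
    (hc : Set (M.carrier s) = Set (M.carrier t)) (φ : Pattern σ s) (ρ : Val M) :
    eval (cast hp φ) ρ = cast hc (eval φ ρ) := by subst h; rfl

theorem mem_cast_set {s t : σ.S} (h : s = t) (hc : Set (M.carrier s) = Set (M.carrier t))
    (hm : M.carrier t = M.carrier s) (S : Set (M.carrier s)) (b : M.carrier t) :
    b ∈ cast hc S ↔ cast hm b ∈ S := by subst h; rfl

theorem cast_set_empty_iff {s t : σ.S} (h : s = t)
    (hc : Set (M.carrier s) = Set (M.carrier t)) (S : Set (M.carrier s)) :
    cast hc S = ∅ ↔ S = ∅ := by subst h; rfl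

theorem cast_set_univ {s t : σ.S} (h : s = t)
    (hc : Set (M.carrier s) = Set (M.carrier t)) :
    cast hc (Set.univ : Set (M.carrier s)) = Set.univ := by subst h; rfl

theorem cast_set_empty {s t : σ.S} (h : s = t)
    (hc : Set (M.carrier s) = Set (M.carrier t)) :
    cast hc (∅ : Set (M.carrier s)) = ∅ := by subst h; rfl

theorem fin_eq_of_n1 {d : σ.Sym} (hn : σ.n d = 1) (j j' : Fin (σ.n d)) : j = j' :=
  Fin.ext (by have := j.isLt; have := j'.isLt; omega)

/-- Evaluation of `⌈ψ⌉` as a set comprehension. -/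
theorem eval_ceil (d : σ.Sym) (hn : σ.n d = 1) (ψ : Pattern σ (arg1 d hn)) (ρ : Val M) :
    eval (ceil d hn ψ) ρ =
      {b | ∃ c ∈ eval ψ ρ,
        b ∈ M.interp d (fun j => cast (congrArg M.carrier (arg1_eq d hn j)) c)} := by
  ext b
  constructor
  · rintro ⟨a, ha, hb⟩
    have h0 : arg1 d hn = σ.arg d ⟨0, by omega⟩ := arg1_eq d hn ⟨0, by omega⟩
    refine ⟨cast (congrArg M.carrier h0.symm) (a ⟨0, by omega⟩), ?_, ?_⟩
    · have := ha ⟨0, by omega⟩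
      rw [eval_cast' h0 _ (congrArg (fun u => Set (M.carrier u)) h0)] at this
      rw [mem_cast_set h0 _ (congrArg M.carrier h0.symm)] at this
      exact this
    · have ha' : a = fun j => cast (congrArg M.carrier (arg1_eq d hn j))
          (cast (congrArg M.carrier h0.symm) (a ⟨0, by omega⟩)) := by
        funext j
        have hj : j = ⟨0, by omega⟩ := fin_eq_of_n1 hn j ⟨0, by omega⟩
        subst hj
        rfl
      rw [← ha']
      exact hb
  · rintro ⟨c, hc, hb⟩
    refine ⟨fun j => cast (congrArg M.carrier (arg1_eq d hn j)) c, fun j => ?_, hb⟩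
    have hj : arg1 d hn = σ.arg d j := arg1_eq d hn j
    rw [eval_cast' hj _ (congrArg (fun u => Set (M.carrier u)) hj)]
    rw [mem_cast_set hj _ (congrArg M.carrier hj.symm)]
    show cast _ (cast _ c) ∈ eval ψ ρ
    rw [cast_cast]
    exact hc

theorem upd_same (ρ : Val M) (s : σ.S) (x : ℕ) (a : M.carrier s) :
    Val.upd ρ s x a s x = a := by
  simp [Val.upd]

/-- From the definedness axiom: the interpretation of `d` is total. -/
theorem interp_total (d : σ.Sym) (hn : σ.n d = 1) (hd : Sat M (defAx d hn))
    (c : M.carrier (arg1 d hn)) (b : M.carrier (σ.res d)) :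
    b ∈ M.interp d (fun j => cast (congrArg M.carrier (arg1_eq d hn j)) c) := by
  set ρ₀ : Val M := Val.upd (fun s _ => Classical.choice (M.nonempty s)) (arg1 d hn) 0 c with hρ₀
  have h := hd ρ₀
  have hb : b ∈ eval (defAx d hn) ρ₀ := by rw [h]; trivial
  rw [defAx, eval_ceil] at hb
  obtain ⟨c', hc', hb⟩ := hb
  have : c' = c := by
    have : ρ₀ (arg1 d hn) 0 = c := upd_same _ _ _ _
    simpa [eval, this] using hc'
  rwa [this] at hb

/-- Dichotomy for `⌈ψ⌉` in a model of the definedness axiom. -/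
theorem ceil_dichotomy (d : σ.Sym) (hn : σ.n d = 1) (hd : Sat M (defAx d hn))
    (ψ : Pattern σ (arg1 d hn)) (ρ : Val M) :
    (eval ψ ρ = ∅ ∧ eval (ceil d hn ψ) ρ = ∅) ∨
      ((eval ψ ρ : Set _) ≠ ∅ ∧ eval (ceil d hn ψ) ρ = Set.univ) := by
  by_cases h : (eval ψ ρ : Set _) = ∅
  · left
    refine ⟨h, ?_⟩
    rw [eval_ceil]
    ext b
    simp [h]
  · right
    refine ⟨h, ?_⟩
    obtain ⟨c, hc⟩ := Set.nonempty_iff_ne_empty.mpr h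
    rw [eval_ceil]
    ext b
    simp only [Set.mem_univ, iff_true, Set.mem_setOf_eq]
    exact ⟨c, hc, interp_total d hn hd c b⟩

theorem eval_app_congr (f : σ.Sym) (a₁ a₂ : ∀ j : Fin (σ.n f), Pattern σ (σ.arg f j))
    (ρ : Val M) (h : ∀ j, eval (a₁ j) ρ = (eval (a₂ j) ρ : Set _)) :
    eval (.app f a₁) ρ = eval (.app f a₂) ρ := by
  show {b | ∃ a, (∀ j, a j ∈ eval (a₁ j) ρ) ∧ b ∈ M.interp f a}
      = {b | ∃ a, (∀ j, a j ∈ eval (a₂ j) ρ) ∧ b ∈ M.interp f a}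
  ext b
  constructor <;> rintro ⟨a, ha, hb⟩
  · exact ⟨a, fun j => (h j) ▸ ha j, hb⟩
  · exact ⟨a, fun j => (h j).symm ▸ ha j, hb⟩

end ML

/-- Constraint propagation: `⊨ C[φᵢ ∧ ⌈φ⌉] = C[φᵢ] ∧ ⌈φ⌉`:
both sides evaluate equally under every valuation, in every model satisfying the
definedness axioms (`din` produces the inner sort `sᵢ`, `dout` the outer sort `s`,
both applied to the same argument sort). -/
theorem stmt15 {σ : ML.Signature} (f : σ.Sym) (i : Fin (σ.n f))
    (args : ∀ j : Fin (σ.n f), ML.Pattern σ (σ.arg f j))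
    (din dout : σ.Sym) (hin : σ.n din = 1) (hout : σ.n dout = 1)
    (hri : σ.res din = σ.arg f i) (hro : σ.res dout = σ.res f)
    (hargs : ML.arg1 dout hout = ML.arg1 din hin)
    (φi : ML.Pattern σ (σ.arg f i)) (φ : ML.Pattern σ (ML.arg1 din hin)) :
    ∀ M : ML.Model σ, ML.Sat M (ML.defAx din hin) → ML.Sat M (ML.defAx dout hout) →
    ∀ ρ : ML.Val M,
      ML.eval (ML.plug f i args (φi.and (cast (by rw [hri]) (ML.ceil din hin φ)))) ρ =
        ML.eval ((ML.plug f i args φi).and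
          (cast (by rw [hro]) (ML.ceil dout hout (cast (by rw [hargs]) φ)))) ρ := by
  intro M hdin hdout ρ
  classical
  set cin : ML.Pattern σ (σ.arg f i) :=
    cast (by rw [hri]) (ML.ceil din hin φ) with hcin
  set cout : ML.Pattern σ (σ.res f) :=
    cast (by rw [hro]) (ML.ceil dout hout (cast (by rw [hargs]) φ)) with hcout
  have hSin : ML.eval cin ρ
      = cast (congrArg (fun u => Set (M.carrier u)) hri) (ML.eval (ML.ceil din hin φ) ρ) :=
    ML.eval_cast' hri _ _ _ _
  have hSout : ML.eval cout ρ
      = cast (congrArg (fun u => Set (M.carrier u)) hro)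
          (ML.eval (ML.ceil dout hout (cast (by rw [hargs]) φ)) ρ) :=
    ML.eval_cast' hro _ _ _ _
  have hφcast : ML.eval (cast (show ML.Pattern σ (ML.arg1 din hin) = ML.Pattern σ (ML.arg1 dout hout) by rw [hargs]) φ) ρ
      = cast (congrArg (fun u => Set (M.carrier u)) hargs.symm) (ML.eval φ ρ) :=
    ML.eval_cast' hargs.symm _ _ _ _
  by_cases hφ : (ML.eval φ ρ : Set (M.carrier (ML.arg1 din hin))) = ∅
  · -- empty case: both sides are ∅
    have hin0 : ML.eval (ML.ceil din hin φ) ρ = ∅ := by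
      rcases ML.ceil_dichotomy din hin hdin φ ρ with ⟨_, h⟩ | ⟨h, _⟩
      · exact h
      · exact absurd hφ h
    have hout0 : ML.eval (ML.ceil dout hout (cast (by rw [hargs]) φ)) ρ = ∅ := by
      rcases ML.ceil_dichotomy dout hout hdout (cast (by rw [hargs]) φ) ρ with ⟨_, h⟩ | ⟨h, _⟩
      · exact h
      · exact absurd (by rw [hφcast, hφ, ML.cast_set_empty hargs.symm]) h
    have hSin0 : ML.eval cin ρ = ∅ := by
      rw [hSin, hin0, ML.cast_set_empty hri]
    have hSout0 : ML.eval cout ρ = ∅ := by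
      rw [hSout, hout0, ML.cast_set_empty hro]
    have hL : ML.eval (ML.plug f i args (φi.and cin)) ρ = ∅ := by
      ext b
      simp only [ML.plug, ML.eval, Set.mem_setOf_eq, Set.mem_empty_iff_false, iff_false]
      rintro ⟨a, ha, hb⟩
      have hai := ha i
      rw [dif_pos rfl] at hai
      rw [ML.eval_cast' rfl _ rfl] at hai
      rw [cast_eq] at hai
      have : a i ∈ ML.eval φi ρ ∩ ML.eval cin ρ := hai
      rw [hSin0] at this
      exact this.2.elim
    have hR : ML.eval ((ML.plug f i args φi).and cout) ρ = ∅ := by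
      show ML.eval (ML.plug f i args φi) ρ ∩ ML.eval cout ρ = ∅
      rw [hSout0, Set.inter_empty]
    rw [hL, hR]
  · -- nonempty case: both constraints are ⊤
    have hin1 : ML.eval (ML.ceil din hin φ) ρ = Set.univ := by
      rcases ML.ceil_dichotomy din hin hdin φ ρ with ⟨h, _⟩ | ⟨_, h⟩
      · exact absurd h hφ
      · exact h
    have hout1 : ML.eval (ML.ceil dout hout (cast (by rw [hargs]) φ)) ρ = Set.univ := by
      rcases ML.ceil_dichotomy dout hout hdout (cast (by rw [hargs]) φ) ρ with ⟨h, _⟩ | ⟨_, h⟩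
      · rw [hφcast, ML.cast_set_empty_iff hargs.symm] at h
        exact absurd h hφ
      · exact h
    have hSin1 : ML.eval cin ρ = Set.univ := by
      rw [hSin, hin1, ML.cast_set_univ hri]
    have hSout1 : ML.eval cout ρ = Set.univ := by
      rw [hSout, hout1, ML.cast_set_univ hro]
    have hL : ML.eval (ML.plug f i args (φi.and cin)) ρ
        = ML.eval (ML.plug f i args φi) ρ := by
      apply ML.eval_app_congr
      intro j
      by_cases hj : j = i
      · subst hj
        rw [dif_pos rfl, dif_pos rfl]
        rw [ML.eval_cast' rfl _ rfl, ML.eval_cast' rfl _ rfl, cast_eq, cast_eq]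
        show ML.eval φi ρ ∩ ML.eval cin ρ = ML.eval φi ρ
        rw [hSin1, Set.inter_univ]
      · rw [dif_neg hj, dif_neg hj]
    have hR : ML.eval ((ML.plug f i args φi).and cout) ρ
        = ML.eval (ML.plug f i args φi) ρ := by
      show ML.eval (ML.plug f i args φi) ρ ∩ ML.eval cout ρ = _
      rw [hSout1, Set.inter_univ]
    rw [hL, hR]
end

section
/- Functional substitution is valid: ⊨ (∀x.φ) ∧ (∃y.φ' = y) → φ[φ'/x], where y ∉ FV(φ'); i.e., a universally quantified pattern may be instantiated with any pattern that is provably functional (evaluates to a singleton). Moreover, the unrestricted substitution axiom (∀x.φ) → φ[φ'/x] fails for arbitrary patterns φ'. -/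
namespace ML
variable {σ : Signature} {M : Model σ}

theorem eval_congr : ∀ {s : σ.S} (φ : Pattern σ s) (ρ₁ ρ₂ : Val M),
    (∀ v ∈ FV φ, ρ₁ v.1 v.2 = ρ₂ v.1 v.2) → eval φ ρ₁ = eval φ ρ₂
  | _, .var s x, ρ₁, ρ₂, h => by
      simp only [eval]; rw [h ⟨s, x⟩ rfl]
  | _, .app f args, ρ₁, ρ₂, h => by
      simp only [eval]
      ext b
      constructor <;> rintro ⟨a, ha, hb⟩ <;> refine ⟨a, fun i => ?_, hb⟩
      · rw [← eval_congr (args i) ρ₁ ρ₂ (fun v hv => h v (Set.mem_iUnion.2 ⟨i, hv⟩))]; exact ha i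
      · rw [eval_congr (args i) ρ₁ ρ₂ (fun v hv => h v (Set.mem_iUnion.2 ⟨i, hv⟩))]; exact ha i
  | _, .neg φ, ρ₁, ρ₂, h => by
      simp only [eval]; rw [eval_congr φ ρ₁ ρ₂ h]
  | _, .and φ ψ, ρ₁, ρ₂, h => by
      simp only [eval]
      rw [eval_congr φ ρ₁ ρ₂ (fun v hv => h v (Or.inl hv)),
          eval_congr ψ ρ₁ ρ₂ (fun v hv => h v (Or.inr hv))]
  | _, .ex s' x φ, ρ₁, ρ₂, h => by
      simp only [eval]
      refine Set.iUnion_congr fun a => eval_congr φ _ _ (fun v hv => ?_)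
      by_cases hvx : v = ⟨s', x⟩
      · subst hvx; simp [Val.upd]
      · have : v ∈ FV (Pattern.ex s' x φ) := ⟨hv, hvx⟩
        obtain ⟨vs, vn⟩ := v
        simp only [Val.upd]
        by_cases hc : vs = s' ∧ vn = x
        · exact absurd (by rw [hc.1, hc.2]) hvx
        · rw [dif_neg hc, dif_neg hc]; exact h _ this


theorem upd_comm (ρ : Val M) {s t : σ.S} {y x : ℕ} (b : M.carrier s) (a : M.carrier t)
    (h : ¬(s = t ∧ y = x)) : (ρ.upd s y b).upd t x a = (ρ.upd t x a).upd s y b := by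
  funext vs vn
  simp only [Val.upd]
  split_ifs with h1 h2 h2 <;> try rfl
  exact absurd ⟨h2.1.symm.trans h1.1, h2.2.symm.trans h1.2⟩ h

theorem subst_eval : ∀ {s : σ.S} (φ : Pattern σ s) (t : σ.S) (x : ℕ) (ψ : Pattern σ t)
    (ρ : Val M) (a : M.carrier t), eval ψ ρ = {a} → (∀ v ∈ FV ψ, v ∉ BV φ) →
    eval (subst φ t x ψ) ρ = eval φ (ρ.upd t x a)
  | _, .var s' y, t, x, ψ, ρ, a, hψ, _ => by
      simp only [subst]
      by_cases h : s' = t ∧ y = x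
      · rw [dif_pos h]
        obtain ⟨rfl, rfl⟩ := h
        rw [cast_eq]
        simp only [eval]
        have hu : Val.upd ρ s' y a s' y = a := by simp [Val.upd]
        rw [hu]; exact hψ
      · rw [dif_neg h]
        simp only [eval, Val.upd, dif_neg h]
  | _, .app f args, t, x, ψ, ρ, a, hψ, hbv => by
      simp only [subst, eval]
      ext b
      have key : ∀ i, eval (subst (args i) t x ψ) ρ = eval (args i) (ρ.upd t x a) :=
        fun i => subst_eval (args i) t x ψ ρ a hψ
          (fun v hv hb => hbv v hv (Set.mem_iUnion.2 ⟨i, hb⟩))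
      constructor <;> rintro ⟨c, hc, hb⟩ <;> refine ⟨c, fun i => ?_, hb⟩
      · rw [← key i]; exact hc i
      · rw [key i]; exact hc i
  | _, .neg φ, t, x, ψ, ρ, a, hψ, hbv => by
      simp only [subst, eval, subst_eval φ t x ψ ρ a hψ hbv]
  | _, .and φ₁ φ₂, t, x, ψ, ρ, a, hψ, hbv => by
      simp only [subst, eval,
        subst_eval φ₁ t x ψ ρ a hψ (fun v hv => fun hb => hbv v hv (Or.inl hb)),
        subst_eval φ₂ t x ψ ρ a hψ (fun v hv => fun hb => hbv v hv (Or.inr hb))]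
  | _, .ex s' y φ, t, x, ψ, ρ, a, hψ, hbv => by
      simp only [subst]
      by_cases h : s' = t ∧ y = x
      · rw [if_pos h]
        obtain ⟨rfl, rfl⟩ := h
        refine eval_congr _ _ _ (fun v hv => ?_)
        obtain ⟨vs, vn⟩ := v
        have : ¬(vs = s' ∧ vn = y) := by
          rintro ⟨rfl, rfl⟩; exact hv.2 rfl
        simp only [Val.upd, dif_neg this]
      · rw [if_neg h]
        simp only [eval]
        refine Set.iUnion_congr fun b => ?_
        have h1 : eval ψ (ρ.upd s' y b) = {a} := by
          rw [eval_congr ψ _ ρ (fun v hv => ?_)]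
          · exact hψ
          · obtain ⟨vs, vn⟩ := v
            have : ¬(vs = s' ∧ vn = y) := by
              rintro ⟨rfl, rfl⟩
              exact hbv ⟨vs, vn⟩ hv (Or.inr rfl)
            simp only [Val.upd, dif_neg this]
        rw [subst_eval φ t x ψ (ρ.upd s' y b) a h1
          (fun v hv hb => hbv v hv (Or.inl hb))]
        rw [upd_comm ρ b a h]

theorem eval_neg {s : σ.S} (φ : Pattern σ s) (ρ : Val M) :
    eval (Pattern.neg φ) ρ = (eval φ ρ)ᶜ := rfl

theorem eval_and {s : σ.S} (φ ψ : Pattern σ s) (ρ : Val M) :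
    eval (Pattern.and φ ψ) ρ = eval φ ρ ∩ eval ψ ρ := rfl

theorem eval_ex {s s' : σ.S} (x : ℕ) (φ : Pattern σ s) (ρ : Val M) :
    eval (Pattern.ex s' x φ) ρ = ⋃ a : M.carrier s', eval φ (ρ.upd s' x a) := rfl

theorem eval_var (s : σ.S) (x : ℕ) (ρ : Val M) :
    eval (M := M) (Pattern.var s x) ρ = {ρ s x} := rfl

theorem piff_eval {s : σ.S} (φ ψ : Pattern σ s) (ρ : Val M) :
    eval (Pattern.piff φ ψ) ρ = Set.univ ↔ eval φ ρ = eval ψ ρ := by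
  simp only [Pattern.piff, Pattern.imp, Pattern.or, eval, compl_compl]
  rw [Set.eq_univ_iff_forall, Set.ext_iff]
  constructor
  · intro h m
    have := h m
    simp only [Set.mem_inter_iff, Set.mem_compl_iff, Set.mem_inter_iff, not_and, not_not] at this
    constructor
    · intro hm; exact this.1 hm
    · intro hm; exact this.2 hm
  · intro h m
    have := h m
    simp only [Set.mem_inter_iff, Set.mem_compl_iff, not_and, not_not]
    exact ⟨fun hm => this.1 hm, fun hm => this.2 hm⟩

open Classical in
theorem ceil_eval (d : σ.Sym) (hn : σ.n d = 1) (hdef : Sat M (defAx d hn))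
    (χ : Pattern σ (arg1 d hn)) (ρ : Val M) :
    eval (ceil d hn χ) ρ = if eval χ ρ = (∅ : Set _) then ∅ else Set.univ := by
  split_ifs with h
  · ext b
    simp only [ceil, eval, Set.mem_setOf_eq, Set.mem_empty_iff_false, iff_false, not_exists]
    rintro a ⟨ha, _⟩
    have hi0 := ha ⟨0, by omega⟩
    have hi0 : _ ∈ eval χ ρ := hi0
    rw [h] at hi0
    exact hi0
  · obtain ⟨c, hc⟩ := Set.nonempty_iff_ne_empty.2 h
    ext b
    simp only [Set.mem_univ, iff_true]
    -- use the definedness axiom at a valuation sending variable 0 to c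
    have hd := hdef (Val.upd (fun s _ => Classical.choice (M.nonempty s)) (arg1 d hn) 0 c)
    rw [Set.eq_univ_iff_forall] at hd
    have hb := hd b
    simp only [defAx, ceil, eval, Set.mem_setOf_eq] at hb
    obtain ⟨a, ha, hba⟩ := hb
    refine ⟨a, fun i => ?_, hba⟩
    have hi : i = ⟨0, by omega⟩ := Fin.ext (by have := i.isLt; omega)
    subst hi
    have h0 := ha ⟨0, by omega⟩
    beta_reduce
    erw [cast_eq] at h0 ⊢
    simp only [eval, Set.mem_singleton_iff] at h0
    have hac : a ⟨0, by omega⟩ = c := by rw [h0]; exact (dif_pos ⟨rfl, rfl⟩).trans (cast_eq _ _)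
    rw [hac]; exact hc

open Classical in
theorem eqP_eval (d : σ.Sym) (hn : σ.n d = 1) (hdef : Sat M (defAx d hn))
    (φ φ' : Pattern σ (arg1 d hn)) (ρ : Val M) :
    eval (eqP d hn φ φ') ρ = if eval φ ρ = eval φ' ρ then Set.univ else ∅ := by
  rw [eqP, floor, eval_neg, ceil_eval d hn hdef, eval_neg]
  by_cases h : eval φ ρ = eval φ' ρ
  · rw [if_pos h]
    have hu : eval (φ.piff φ') ρ = Set.univ := (piff_eval φ φ' ρ).2 h
    rw [hu, Set.compl_univ, if_pos rfl, Set.compl_empty]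
  · rw [if_neg h]
    have hne : eval (φ.piff φ') ρ ≠ Set.univ := fun hu => h ((piff_eval φ φ' ρ).1 hu)
    have h2 : (eval (φ.piff φ') ρ)ᶜ ≠ ∅ := by
      rw [← Set.compl_univ, compl_injective.ne_iff]; exact hne
    rw [if_neg h2, Set.compl_univ]

theorem subst_ceil (d : σ.Sym) (hn : σ.n d = 1) (χ : Pattern σ (arg1 d hn)) (t : σ.S) (x : ℕ)
    (ψ : Pattern σ t) : subst (ceil d hn χ) t x ψ = ceil d hn (subst χ t x ψ) := by
  simp only [ceil, subst]
  congr 1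
  funext j
  have hj : j = ⟨0, by omega⟩ := Fin.ext (by have := j.isLt; omega)
  subst hj
  erw [cast_eq, cast_eq]
  rfl

theorem subst_eqP (d : σ.Sym) (hn : σ.n d = 1) (φ φ' : Pattern σ (arg1 d hn)) (t : σ.S) (x : ℕ)
    (ψ : Pattern σ t) :
    subst (eqP d hn φ φ') t x ψ = eqP d hn (subst φ t x ψ) (subst φ' t x ψ) := by
  have h1 : subst (eqP d hn φ φ') t x ψ
      = .neg (subst (ceil d hn ((φ.piff φ').neg)) t x ψ) := rfl
  have h : subst ((φ.piff φ').neg) t x ψ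
      = ((subst φ t x ψ).piff (subst φ' t x ψ)).neg := by
    simp only [Pattern.piff, Pattern.imp, Pattern.or, subst]
  rw [h1, subst_ceil, h]
  rfl
noncomputable section
def σc : Signature := ⟨Unit, Unit, fun _ => 1, fun _ _ => (), fun _ => ()⟩
def Mc : Model σc := ⟨fun _ => Bool, fun _ => ⟨true⟩, fun _ _ => Set.univ⟩
attribute [reducible] σc Mc

theorem hdefc : Sat Mc (defAx () rfl) := by
  intro ρ
  ext b
  simp only [defAx, ceil, eval, Set.mem_setOf_eq, Set.mem_univ, iff_true]
  refine ⟨fun _ => ρ () 0, fun i => ?_, trivial⟩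
  have hv : (i : ℕ) = 0 := Nat.lt_one_iff.1 (by simpa [σc] using i.isLt)
  have hi : i = ⟨0, by simp [σc]⟩ := Fin.ext (by simp [hv])
  subst hi
  rfl

theorem part2 : ¬ Sat Mc ((Pattern.all () 0
      (Pattern.ex () 1 (eqP () rfl (Pattern.var (σ := σc) () 0) (Pattern.var (σ := σc) () 1)))).imp
    (subst (Pattern.ex () 1 (eqP () rfl (Pattern.var (σ := σc) () 0) (Pattern.var (σ := σc) () 1))) () 0
      (Pattern.or (Pattern.var (σ := σc) () 0) (Pattern.neg (Pattern.var (σ := σc) () 0))))) := by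
  set ψ : Pattern σc () := Pattern.ex () 1 (eqP () rfl (Pattern.var (σ := σc) () 0) (Pattern.var (σ := σc) () 1)) with hψ
  set ψ' : Pattern σc () := Pattern.or (Pattern.var (σ := σc) () 0) (Pattern.neg (Pattern.var (σ := σc) () 0)) with hψ'
  intro hsat
  have h := Set.eq_univ_iff_forall.1 (hsat (fun _ _ => true)) true
  simp only [Pattern.imp, Pattern.or, eval_neg, eval_and, compl_compl, Set.mem_compl_iff,
    Set.mem_inter_iff, not_and, not_not] at h
  set ρt : Val Mc := (fun _ _ => true) with hρt
  have e1 : subst ψ () 0 ψ' =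
      Pattern.ex () 1 (subst (eqP () rfl (Pattern.var (σ := σc) () 0) (Pattern.var (σ := σc) () 1)) () 0 ψ') := by
    rw [hψ]
    exact if_neg (by simp)
  have e2 : subst (Pattern.var (σ := σc) () 0 : Pattern σc ()) () 0 ψ' = ψ' :=
    (dif_pos ⟨rfl, rfl⟩).trans (cast_eq _ _)
  have e3 : subst (Pattern.var (σ := σc) () 1 : Pattern σc ()) () 0 ψ' = Pattern.var (σ := σc) () 1 :=
    dif_neg (by simp)
  have hsub : subst ψ () 0 ψ' = Pattern.ex () 1 (eqP () rfl ψ' (Pattern.var (σ := σc) () 1)) := by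
    rw [e1, subst_eqP, e2, e3]
  have hψ'univ : ∀ ρ : Val Mc, eval ψ' ρ = Set.univ := by
    intro ρ
    rw [hψ']
    simp only [Pattern.or, eval_neg, eval_and, eval_var, compl_compl]
    have h0 : ({ρ () 0} : Set Bool)ᶜ ∩ {ρ () 0} = ∅ := Set.compl_inter_self _
    rw [h0, Set.compl_empty]
  have hB : true ∉ eval (subst ψ () 0 ψ') ρt := by
    rw [hsub, eval_ex]
    intro hmem
    obtain ⟨c, hc⟩ := Set.mem_iUnion.1 hmem
    rw [eqP_eval (σ := σc) () rfl hdefc] at hc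
    have hne : eval ψ' (ρt.upd () 1 c) ≠
        eval (Pattern.var (σ := σc) () 1) (ρt.upd () 1 c) := by
      rw [hψ'univ, eval_var]
      intro hun
      have h1 : (!(ρt.upd () 1 c () 1)) ∈ ({ρt.upd () 1 c () 1} : Set Bool) :=
        hun ▸ Set.mem_univ _
      simp at h1
    rw [if_neg hne] at hc
    exact hc
  have hA : true ∈ eval (Pattern.all () 0 ψ) ρt := by
    rw [Pattern.all, eval_neg, eval_ex, Set.mem_compl_iff, Set.mem_iUnion]
    push_neg
    intro b
    rw [eval_neg, Set.notMem_compl_iff, hψ, eval_ex, Set.mem_iUnion]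
    refine ⟨(ρt.upd () 0 b) () 0, ?_⟩
    rw [eqP_eval (σ := σc) () rfl hdefc]
    have hvals : ((ρt.upd () 0 b).upd () 1 ((ρt.upd () 0 b) () 0)) () 0
        = ((ρt.upd () 0 b).upd () 1 ((ρt.upd () 0 b) () 0)) () 1 := by
      have l1 : ((ρt.upd () 0 b).upd () 1 ((ρt.upd () 0 b) () 0)) () 0
          = (ρt.upd () 0 b) () 0 := dif_neg (by simp)
      have l2 : ((ρt.upd () 0 b).upd () 1 ((ρt.upd () 0 b) () 0)) () 1
          = (ρt.upd () 0 b) () 0 := (dif_pos ⟨rfl, rfl⟩).trans (cast_eq _ _)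
      rw [l1, l2]
    have hcond : eval (Pattern.var (σ := σc) () 0) ((ρt.upd () 0 b).upd () 1 (ρt.upd () 0 b () 0))
        = eval (Pattern.var (σ := σc) () 1) ((ρt.upd () 0 b).upd () 1 (ρt.upd () 0 b () 0)) :=
      congrArg (fun v => ({v} : Set (Mc.carrier ()))) hvals
    rw [if_pos hcond]
    trivial
  exact h ⟨fun hn => hn hA, hB⟩
end
end ML
/-- Functional Substitution: `⊨ (∀x.φ) ∧ (∃y.φ' = y) → φ[φ'/x]`
with `y ∉ FV(φ')` and capture-free substitution; moreover the unrestricted axiom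
`(∀x.φ) → φ[φ'/x]` fails for arbitrary patterns `φ'`. -/
theorem stmt19 {σ₀ : ML.Signature} (d : σ₀.Sym) (hn : σ₀.n d = 1)
    (x y : ℕ) (φ : ML.Pattern σ₀ (σ₀.res d)) (φ' : ML.Pattern σ₀ (ML.arg1 d hn))
    (hy : (⟨ML.arg1 d hn, y⟩ : (t : σ₀.S) × ℕ) ∉ ML.FV φ')
    (hcap : ∀ v ∈ ML.FV φ', v ∉ ML.BV φ) :
    (∀ M : ML.Model σ₀, ML.Sat M (ML.defAx d hn) →
      ML.Sat M (((ML.Pattern.all (ML.arg1 d hn) x φ).and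
          (ML.Pattern.ex (ML.arg1 d hn) y
            (ML.eqP d hn φ' (ML.Pattern.var (ML.arg1 d hn) y)))).imp
        (ML.subst φ (ML.arg1 d hn) x φ'))) ∧
    ∃ (σ : ML.Signature) (M : ML.Model σ) (s sx : σ.S) (x' : ℕ)
      (ψ : ML.Pattern σ s) (ψ' : ML.Pattern σ sx),
      (∀ v ∈ ML.FV ψ', v ∉ ML.BV ψ) ∧
      ¬ ML.Sat M ((ML.Pattern.all sx x' ψ).imp (ML.subst ψ sx x' ψ')) := by
  open ML in
  constructor
  · intro M hdef ρ
    rw [Set.eq_univ_iff_forall]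
    intro m
    simp only [Pattern.imp, Pattern.or, eval_neg, eval_and, compl_compl, Set.mem_compl_iff,
      Set.mem_inter_iff, not_and, not_not]
    intro hm
    obtain ⟨h1, h2⟩ := hm
    -- from h2 extract the witness a with eval φ' ρ = {a}
    rw [eval_ex] at h2
    obtain ⟨a, ha⟩ := Set.mem_iUnion.1 h2
    rw [eqP_eval d hn hdef] at ha
    have heq : eval φ' (ρ.upd (arg1 d hn) y a) =
        eval (Pattern.var (arg1 d hn) y) (ρ.upd (arg1 d hn) y a) := by
      by_contra hne
      rw [if_neg hne] at ha
      exact ha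
    have hvy : eval (M := M) (Pattern.var (arg1 d hn) y) (ρ.upd (arg1 d hn) y a) = {a} := by
      rw [eval_var]
      congr 1
      exact (dif_pos ⟨rfl, rfl⟩).trans (cast_eq _ _)
    have hφ' : eval φ' ρ = ({a} : Set _) := by
      rw [← heq.trans hvy]
      refine eval_congr φ' ρ _ (fun v hv => ?_)
      obtain ⟨vs, vn⟩ := v
      have hne : ¬(vs = arg1 d hn ∧ vn = y) := by
        rintro ⟨rfl, rfl⟩; exact hy hv
      simp only [Val.upd, dif_neg hne]
    -- from h1: φ holds under every instance of x
    rw [Pattern.all, eval_neg, eval_ex, Set.mem_compl_iff, Set.mem_iUnion] at h1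
    push_neg at h1
    have h1a := h1 a
    rw [eval_neg, Set.notMem_compl_iff] at h1a
    rw [subst_eval φ (arg1 d hn) x φ' ρ a hφ' hcap]
    exact h1a
  · -- counterexample with φ' = ⊤ over a two-element carrier
    refine ⟨σc, Mc, (), (), 0,
      Pattern.ex () 1 (eqP () rfl (Pattern.var (σ := σc) () 0) (Pattern.var (σ := σc) () 1)),
      Pattern.or (Pattern.var (σ := σc) () 0) (Pattern.neg (Pattern.var (σ := σc) () 0)), ?_, part2⟩
    intro v hv
    simp only [Pattern.or, FV, Set.mem_union, Set.mem_singleton_iff, or_self] at hv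
    subst hv
    simp only [BV, eqP, floor, ceil, Pattern.piff, Pattern.imp, Pattern.or,
      cast_eq, Set.mem_union, Set.mem_singleton_iff, Set.mem_iUnion]
    push_neg
    constructor
    · intro i
      simp [BV]
    · simp
end
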